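/- Let M be a positive even integer and define Φ ∈ ℂ^{M×M} by Φ_{u,v} = (1/√M) · exp(−i·π/4) · exp(i·π·(u − v)^2 / M) for u, v ∈ Fin M. Then Φ is unitary: Φ · Φᴴ = 1 (equivalently, ∑_{l=0}^{M−1} exp(i·π·((u−l)^2 − (v−l)^2)/M) = M if u = v and 0 otherwise, for 0 ≤ u, v < M). -/

import Mathlib

open Complex Matrix

/-- Unitarity of the discrete Fresnel transform of even order `M`: the matrix
with entries `Φ u v = (1/√M) e^{-iπ/4} e^{iπ(u-v)²/M}` satisfies `Φ Φᴴ = 1`,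
i.e., the `M` chirps form an orthonormal basis. -/
theorem dfnt_unitary (M : ℕ) (hM : 0 < M) (hMeven : Even M)
    (Φ : Matrix (Fin M) (Fin M) ℂ)
    (hΦ : ∀ u v : Fin M,
      Φ u v = (1 / (Real.sqrt M : ℂ)) * Complex.exp (-Complex.I * Real.pi / 4)
        * Complex.exp (Complex.I * Real.pi * (((u : ℤ) - (v : ℤ)) : ℂ) ^ 2 / M)) :
    Φ * Φᴴ = 1 := by
  have hM0 : (M : ℂ) ≠ 0 := Nat.cast_ne_zero.mpr hM.ne'
  have hsq : (Real.sqrt M : ℂ) * (Real.sqrt M : ℂ) = (M : ℂ) := by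
    rw [← Complex.ofReal_mul, Real.mul_self_sqrt (Nat.cast_nonneg M)]
    norm_cast
  ext u v
  rw [Matrix.mul_apply, Matrix.one_apply]
  simp only [Matrix.conjTranspose_apply]
  have hterm : ∀ l : Fin M, Φ u l * star (Φ v l) =
      (1 / (M : ℂ)) * (Complex.exp (Complex.I * Real.pi * ((((u : ℤ)^2 - (v : ℤ)^2 : ℤ)) : ℂ) / M) *
        (Complex.exp (2 * Real.pi * Complex.I * ((((v : ℤ) - (u : ℤ) : ℤ)) : ℂ) / M)) ^ (l : ℕ)) := by
    intro l
    rw [hΦ u l, hΦ v l]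
    have hstar : star (Complex.exp (Complex.I * Real.pi * (((v : ℤ) - (l : ℤ)) : ℂ) ^ 2 / M))
        = Complex.exp (-(Complex.I * Real.pi * (((v : ℤ) - (l : ℤ)) : ℂ) ^ 2 / M)) := by
      show (starRingEnd ℂ) _ = _
      rw [← Complex.exp_conj]
      congr 1
      simp only [_root_.map_div₀, _root_.map_mul, map_pow, map_sub, Complex.conj_I, Complex.conj_ofReal, map_intCast, map_natCast]
      ring
    have hstar2 : star (Complex.exp (-Complex.I * Real.pi / 4))
        = Complex.exp (Complex.I * Real.pi / 4) := by
      show (starRingEnd ℂ) _ = _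
      rw [← Complex.exp_conj]
      congr 1
      simp only [_root_.map_div₀, _root_.map_mul, map_neg, Complex.conj_I, Complex.conj_ofReal, map_ofNat]
      ring
    have hc : star ((1 : ℂ) / (Real.sqrt M : ℂ)) = (1 / (Real.sqrt M : ℂ)) := by
      show (starRingEnd ℂ) _ = _
      simp [Complex.conj_ofReal]
    rw [star_mul', star_mul', hstar, hstar2, hc]
    trans ((1 / (Real.sqrt M : ℂ)) * (1 / (Real.sqrt M : ℂ))) *
      (Complex.exp (-Complex.I * Real.pi / 4) * Complex.exp (Complex.I * Real.pi / 4) *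
        (Complex.exp (Complex.I * Real.pi * (((u : ℤ) - (l : ℤ)) : ℂ) ^ 2 / M) *
          Complex.exp (-(Complex.I * Real.pi * (((v : ℤ) - (l : ℤ)) : ℂ) ^ 2 / M))))
    · ring
    rw [← Complex.exp_add, ← Complex.exp_add, ← Complex.exp_add]
    conv_rhs => rw [← Complex.exp_nat_mul, ← Complex.exp_add]
    congr 1
    · rw [div_mul_div_comm, one_mul, hsq]
    · congr 1
      push_cast
      field_simp
      ring
  rw [Finset.sum_congr rfl (fun l _ => hterm l), ← Finset.mul_sum, ← Finset.mul_sum]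
  by_cases huv : u = v
  · subst huv
    simp only [if_pos rfl, sub_self, Int.cast_zero, mul_zero, zero_div, Complex.exp_zero,
      one_pow, mul_one, Finset.sum_const, Finset.card_univ, Fintype.card_fin, nsmul_eq_mul]
    field_simp
    simp
  · rw [if_neg huv]
    set ζ : ℂ := Complex.exp (2 * Real.pi * Complex.I * ((((v : ℤ) - (u : ℤ) : ℤ)) : ℂ) / M) with hζ
    have hζM : ζ ^ M = 1 := by
      rw [hζ, ← Complex.exp_nat_mul]
      have : (M : ℂ) * (2 * Real.pi * Complex.I * ((((v : ℤ) - (u : ℤ) : ℤ)) : ℂ) / M)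
          = (((v : ℤ) - (u : ℤ) : ℤ) : ℂ) * (2 * Real.pi * Complex.I) := by
        field_simp
      rw [this, Complex.exp_int_mul_two_pi_mul_I]
    have hζ1 : ζ ≠ 1 := by
      intro h
      rw [hζ, Complex.exp_eq_one_iff] at h
      obtain ⟨n, hn⟩ := h
      have h2 : ((2 : ℂ) * Real.pi * Complex.I) ≠ 0 := by
        simp [Real.pi_ne_zero, Complex.I_ne_zero]
      have hk : ((((v : ℤ) - (u : ℤ) : ℤ)) : ℂ) = n * M := by
        field_simp at hn
        apply mul_right_cancel₀ h2
        push_cast at hn ⊢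
        linear_combination (2 * Real.pi * Complex.I) * hn
      have hk' : ((v : ℤ) - (u : ℤ)) = n * M := by exact_mod_cast hk
      have hd : (M : ℤ) ∣ ((v : ℤ) - (u : ℤ)) := ⟨n, by linarith [hk']⟩
      have habs : |((v : ℤ) - (u : ℤ))| < (M : ℤ) := by
        have h1 : (u : ℤ) < M := by exact_mod_cast u.isLt
        have h2 : (v : ℤ) < M := by exact_mod_cast v.isLt
        have h3 : (0 : ℤ) ≤ (u : ℤ) := Int.ofNat_nonneg _
        have h4 : (0 : ℤ) ≤ (v : ℤ) := Int.ofNat_nonneg _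
        rw [abs_lt]; omega
      have := Int.eq_zero_of_abs_lt_dvd hd habs
      have : (v : ℤ) = (u : ℤ) := by omega
      exact huv (Fin.ext (by exact_mod_cast this.symm))
    have hsum : ∑ l : Fin M, ζ ^ (l : ℕ) = 0 := by
      rw [Fin.sum_univ_eq_sum_range (fun i => ζ ^ i), geom_sum_eq hζ1, hζM]
      simp
    rw [hsum, mul_zero, mul_zero]
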